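/- If ‖·‖ is an M-norm on M_n(ℂ), then there exists α > 0 such that ‖A‖ = α‖A‖_∞ for every normal matrix A ∈ M_n(ℂ). -/

import Mathlib

set_option maxHeartbeats 1000000
set_option synthInstance.maxHeartbeats 400000


open Matrix BigOperators ComplexOrder

/-- Square complex matrices. -/
abbrev Mat (n : ℕ) := Matrix (Fin n) (Fin n) ℂ

/-- `N` is a norm on `Mat n`. -/
def IsMatrixNorm {n : ℕ} (N : Mat n → ℝ) : Prop :=
  (∀ A, N A = 0 ↔ A = 0) ∧
  (∀ (c : ℂ) (A : Mat n), N (c • A) = ‖c‖ * N A) ∧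
  (∀ A B : Mat n, N (A + B) ≤ N A + N B)

/-- A set of matrices is C*-convex. -/
def CStarConvex {n : ℕ} (K : Set (Mat n)) : Prop :=
  ∀ (k : ℕ) (C A : Fin k → Mat n), (∀ i, A i ∈ K) →
    (∑ i, (C i)ᴴ * C i = 1) → (∑ i, (C i)ᴴ * A i * C i) ∈ K

/-- `N` is an M-norm. -/
def IsMNorm {n : ℕ} (N : Mat n → ℝ) : Prop :=
  ∀ (k : ℕ) (C X : Fin k → Mat n), (∑ i, (C i)ᴴ * C i = 1) →
    N (∑ i, (C i)ᴴ * X i * C i) ≤ ⨆ i, N (X i)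

/-- `N` is an L-norm. -/
def IsLNorm {n : ℕ} (N : Mat n → ℝ) : Prop :=
  ∀ (k : ℕ) (C : Fin k → Mat n) (X : Mat n), (∑ i, (C i)ᴴ * C i = 1) →
    ∑ i, N (C i * X * (C i)ᴴ) ≤ N X

/-- The dual norm with respect to the pairing `⟨Y|X⟩ = Tr(Yᴴ X)`. -/
noncomputable def dualNorm {n : ℕ} (N : Mat n → ℝ) (Y : Mat n) : ℝ :=
  sSup {r | ∃ X : Mat n, N X ≤ 1 ∧ r = ‖(Yᴴ * X).trace‖}

/-- The operator (spectral) norm of a matrix. -/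
noncomputable def opNorm {n : ℕ} (A : Mat n) : ℝ :=
  ‖Matrix.toEuclideanCLM (𝕜 := ℂ) (n := Fin n) A‖

/-- The trace norm `‖A‖₁ = Tr((AᴴA)^{1/2})`. -/
noncomputable def traceNorm {n : ℕ} (A : Mat n) : ℝ :=
  ((Matrix.posSemidef_conjTranspose_mul_self A).1.eigenvectorUnitary.1 *
    diagonal (((↑) : ℝ → ℂ) ∘ Real.sqrt ∘ (Matrix.posSemidef_conjTranspose_mul_self A).1.eigenvalues) *
    (star (Matrix.posSemidef_conjTranspose_mul_self A).1.eigenvectorUnitary : Mat n)).trace.re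

/-- The numerical radius. -/
noncomputable def numRadius {n : ℕ} (A : Mat n) : ℝ :=
  sSup {r | ∃ x : EuclideanSpace ℂ (Fin n), ‖x‖ = 1 ∧
    r = ‖inner ℂ x (Matrix.toEuclideanCLM (𝕜 := ℂ) (n := Fin n) A x)‖}

section Aux

open Matrix

lemma toEuclideanLin_comp {n : ℕ} (M P : Mat n) (x : EuclideanSpace ℂ (Fin n)) :
    Matrix.toEuclideanLin M (Matrix.toEuclideanLin P x) = Matrix.toEuclideanLin (M * P) x := by
  simp [Matrix.toEuclideanLin_apply, Matrix.mulVec_mulVec]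

lemma normal_eigenbasis {n : ℕ} (A : Mat n) (hA : Aᴴ * A = A * Aᴴ) :
    ∃ (b : OrthonormalBasis (Fin n) ℂ (EuclideanSpace ℂ (Fin n))) (μ : Fin n → ℂ),
      ∀ j, A *ᵥ ⇑(b j) = μ j • ⇑(b j) := by
  classical
  set X : Mat n := A + Aᴴ with hX
  set Y : Mat n := Complex.I • (A - Aᴴ) with hY
  have hXh : X.IsHermitian := by
    simp [Matrix.IsHermitian, hX, conjTranspose_add, add_comm]
  have hYh : Y.IsHermitian := by
    simp only [Matrix.IsHermitian, hY, conjTranspose_smul, conjTranspose_sub,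
      conjTranspose_conjTranspose]
    rw [Complex.star_def, Complex.conj_I, neg_smul, smul_sub, smul_sub]
    abel
  have hXY : X * Y = Y * X := by
    simp only [hX, hY, Matrix.mul_smul, Matrix.smul_mul]
    rw [mul_sub, sub_mul, add_mul, mul_add, add_mul, mul_add, hA]
  have hsym1 : (Matrix.toEuclideanLin X).IsSymmetric :=
    Matrix.isHermitian_iff_isSymmetric.mp hXh
  have hsym2 : (Matrix.toEuclideanLin Y).IsSymmetric :=
    Matrix.isHermitian_iff_isSymmetric.mp hYh
  have hcomm : Commute (Matrix.toEuclideanLin X) (Matrix.toEuclideanLin Y) := by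
    unfold Commute SemiconjBy
    ext x
    simp only [Module.End.mul_apply, toEuclideanLin_comp, hXY]
  have hfam := LinearMap.IsSymmetric.orthogonalFamily_eigenspace_inf_eigenspace hsym1 hsym2
  have hint := LinearMap.IsSymmetric.directSum_isInternal_of_commute hsym1 hsym2 hcomm
  set V : ℂ × ℂ → Submodule ℂ (EuclideanSpace ℂ (Fin n)) := fun i =>
    Module.End.eigenspace (Matrix.toEuclideanLin X) i.2 ⊓
      Module.End.eigenspace (Matrix.toEuclideanLin Y) i.1 with hV
  have hind : iSupIndep V :=
    ((DirectSum.isInternal_submodule_iff_iSupIndep_and_iSup_eq_top V).mp hint).1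
  haveI : Fintype {i : ℂ × ℂ // V i ≠ ⊥} := hind.fintypeNeBotOfFiniteDimensional
  have hint' : DirectSum.IsInternal (fun i : {i : ℂ × ℂ // V i ≠ ⊥} => V i) :=
    DirectSum.isInternal_ne_bot_iff.mpr hint
  have hfam' := hfam.comp
    (Subtype.val_injective : Function.Injective (Subtype.val : {i : ℂ × ℂ // V i ≠ ⊥} → ℂ × ℂ))
  have hfr : Module.finrank ℂ (EuclideanSpace ℂ (Fin n)) = n := finrank_euclideanSpace_fin
  set b := hint'.subordinateOrthonormalBasis hfr hfam' with hb
  set idx := fun a : Fin n => (hint'.subordinateOrthonormalBasisIndex hfr a hfam').val with hidx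
  refine ⟨b, fun a => 2⁻¹ * ((idx a).2 - Complex.I * (idx a).1), fun a => ?_⟩
  have hmem : b a ∈ V (idx a) :=
    hint'.subordinateOrthonormalBasis_subordinate hfr a hfam'
  rw [Submodule.mem_inf] at hmem
  obtain ⟨h1, h2⟩ := hmem
  rw [Module.End.mem_eigenspace_iff] at h1 h2
  have h2A : (2 : ℂ) • A = X + (-Complex.I) • Y := by
    rw [hX, hY, smul_smul]
    simp [two_smul, smul_sub]
  have hAv : Matrix.toEuclideanLin A (b a) =
      (2⁻¹ * ((idx a).2 - Complex.I * (idx a).1)) • b a := by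
    have := congrArg (fun M : Mat n => Matrix.toEuclideanLin M (b a)) h2A
    simp only [_root_.map_smul, map_add, LinearMap.add_apply, LinearMap.smul_apply, h1, h2]
      at this
    have h3 : Matrix.toEuclideanLin A (b a) =
        (2⁻¹ : ℂ) • ((2 : ℂ) • Matrix.toEuclideanLin A (b a)) := by
      rw [smul_smul]; norm_num
    rw [h3, this, smul_add, smul_smul, smul_smul, smul_smul, ← add_smul]
    congr 1
    ring
  have := congrArg (WithLp.equiv 2 (Fin n → ℂ)) hAv
  simpa using this

lemma eig_clm {n : ℕ} (A : Mat n) (v : EuclideanSpace ℂ (Fin n)) (c : ℂ)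
    (h : A *ᵥ ⇑v = c • ⇑v) :
    Matrix.toEuclideanCLM (𝕜 := ℂ) (n := Fin n) A v = c • v := by
  apply (WithLp.equiv 2 (Fin n → ℂ)).injective
  rw [WithLp.equiv_apply, WithLp.equiv_apply, Matrix.ofLp_toEuclideanCLM]
  simpa using h

lemma abs_eig_le_opNorm {n : ℕ} (A : Mat n) (v : EuclideanSpace ℂ (Fin n)) (c : ℂ)
    (h : Matrix.toEuclideanCLM (𝕜 := ℂ) (n := Fin n) A v = c • v) (hv : ‖v‖ = 1) :
    ‖c‖ ≤ opNorm A := by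
  have h2 := (Matrix.toEuclideanCLM (𝕜 := ℂ) (n := Fin n) A).le_opNorm v
  rw [h, norm_smul, hv] at h2
  simpa [opNorm] using h2

lemma opNorm_le_of_eigs {n : ℕ} (A : Mat n)
    (b : OrthonormalBasis (Fin n) ℂ (EuclideanSpace ℂ (Fin n))) (μ : Fin n → ℂ)
    (h : ∀ j, Matrix.toEuclideanCLM (𝕜 := ℂ) (n := Fin n) A (b j) = μ j • b j)
    {c : ℝ} (hc : 0 ≤ c) (hμ : ∀ j, ‖μ j‖ ≤ c) : opNorm A ≤ c := by
  show ‖Matrix.toEuclideanCLM (𝕜 := ℂ) (n := Fin n) A‖ ≤ c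
  refine ContinuousLinearMap.opNorm_le_bound _ hc fun x => ?_
  set T := Matrix.toEuclideanCLM (𝕜 := ℂ) (n := Fin n) A with hT
  have hx : T x = ∑ j, (μ j * b.repr x j) • b j := by
    conv_lhs => rw [← b.sum_repr x]
    rw [map_sum]
    simp only [_root_.map_smul]
    simp [h, smul_smul, mul_comm]
  have hr : ∀ i, b.repr (T x) i = μ i * b.repr x i := by
    intro i
    rw [OrthonormalBasis.repr_apply_apply, hx]
    exact b.orthonormal.inner_right_fintype _ i
  have h1 : ‖T x‖ = ‖b.repr (T x)‖ := (b.repr.norm_map (T x)).symm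
  have h2 : ‖x‖ = ‖b.repr x‖ := (b.repr.norm_map x).symm
  rw [h1, h2, EuclideanSpace.norm_eq, EuclideanSpace.norm_eq]
  have key : ∑ i, ‖b.repr (T x) i‖ ^ 2 ≤ c ^ 2 * ∑ i, ‖b.repr x i‖ ^ 2 := by
    rw [Finset.mul_sum]
    apply Finset.sum_le_sum
    intro i _
    rw [hr i, norm_mul, mul_pow]
    have hb1 : ‖μ i‖ ^ 2 ≤ c ^ 2 := by
      have := hμ i
      nlinarith [norm_nonneg (μ i)]
    exact mul_le_mul_of_nonneg_right hb1 (sq_nonneg _)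
  calc Real.sqrt (∑ i, ‖b.repr (T x) i‖ ^ 2)
      ≤ Real.sqrt (c ^ 2 * ∑ i, ‖b.repr x i‖ ^ 2) := Real.sqrt_le_sqrt key
    _ = c * Real.sqrt (∑ i, ‖b.repr x i‖ ^ 2) := by
        rw [Real.sqrt_mul (sq_nonneg c), Real.sqrt_sq hc]

lemma sum_stdBasis_diag (n : ℕ) : ∑ i : Fin n, single i i (1 : ℂ) = 1 := by
  ext a c
  simp only [Matrix.sum_apply, Matrix.single, Matrix.of_apply, Matrix.one_apply]
  by_cases h : a = c
  · subst h
    rw [Finset.sum_eq_single a]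
    · simp
    · intro i _ hi; simp [hi]
    · simp
  · rw [Finset.sum_eq_zero, if_neg h]
    intro i _
    have : ¬(i = a ∧ i = c) := by rintro ⟨rfl, rfl⟩; exact h rfl
    simp [this]

lemma stdBasis_conjT {n : ℕ} (i j : Fin n) :
    (single i j (1 : ℂ))ᴴ = single j i 1 := by
  ext a c
  simp only [Matrix.conjTranspose_apply, Matrix.single, Matrix.of_apply]
  by_cases h : j = a ∧ i = c
  · obtain ⟨rfl, rfl⟩ := h; simp
  · rw [if_neg h, if_neg (by tauto)]
    simp

lemma sandwich {n : ℕ} (M : Mat n) (i j : Fin n) :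
    single i j (1 : ℂ) * M * single j i 1 = M j j • single i i 1 := by
  ext a c
  by_cases hc : i = c
  · subst hc
    rw [Matrix.mul_single_apply_same 1 j i a]
    by_cases ha : i = a
    · subst ha
      rw [Matrix.single_mul_apply_same 1 i j j]
      simp
    · rw [Matrix.single_mul_apply_of_ne 1 i j a j (fun h => ha h.symm)]
      simp [ha]
  · rw [Matrix.mul_single_apply_of_ne 1 j i a c (fun h => hc h.symm)]
    simp [hc]

lemma sum_smul_stdBasis_diag {n : ℕ} (μ : Fin n → ℂ) :
    ∑ j : Fin n, μ j • single j j (1 : ℂ) = Matrix.diagonal μ := by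
  ext a c
  simp only [Matrix.sum_apply, Matrix.smul_apply, Matrix.single, Matrix.of_apply,
    Matrix.diagonal_apply, smul_eq_mul, mul_ite, mul_one, mul_zero]
  by_cases h : a = c
  · subst h
    rw [Finset.sum_eq_single a]
    · simp
    · intro i _ hi; simp [hi]
    · simp
  · rw [Finset.sum_eq_zero, if_neg h]
    intro i _
    have : ¬(i = a ∧ i = c) := by rintro ⟨rfl, rfl⟩; exact h rfl
    simp [this]

end Aux


theorem MNorm_eq_opNorm_on_normal {n : ℕ} (N : Mat n → ℝ)
    (hN : IsMatrixNorm N) (hM : IsMNorm N) :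
    ∃ α : ℝ, 0 < α ∧ ∀ A : Mat n, Aᴴ * A = A * Aᴴ → N A = α * opNorm A := by
  obtain ⟨hzero, hsmul, hadd⟩ := hN
  rcases Nat.eq_zero_or_pos n with hn | hn
  · refine ⟨1, one_pos, fun A _ => ?_⟩
    subst hn
    have hA0 : A = 0 := Subsingleton.elim A 0
    rw [hA0, (hzero 0).mpr rfl]
    have h0 : opNorm (0 : Mat 0) = 0 := by simp [opNorm, map_zero]
    rw [h0, mul_zero]
  · haveI : NeZero n := ⟨hn.ne'⟩
    have hnn : ∀ B : Mat n, 0 ≤ N B := by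
      intro B
      have h0 : N (0 : Mat n) = 0 := (hzero 0).mpr rfl
      have hneg : N (-B) = N B := by
        have := hsmul (-1) B
        simpa using this
      have h2 := hadd B (-B)
      rw [add_neg_cancel, h0, hneg] at h2
      linarith
    have hpos : 0 < N 1 := by
      rcases lt_or_eq_of_le (hnn 1) with h | h
      · exact h
      · exact absurd ((hzero 1).mp h.symm) one_ne_zero
    refine ⟨N 1, hpos, fun A hA => ?_⟩
    obtain ⟨b, μ, heig⟩ := normal_eigenbasis A hA
    have heigCLM : ∀ j, Matrix.toEuclideanCLM (𝕜 := ℂ) (n := Fin n) A (b j) = μ j • b j :=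
      fun j => eig_clm A (b j) (μ j) (heig j)
    have habs : ∀ j, ‖μ j‖ ≤ opNorm A := fun j =>
      abs_eig_le_opNorm A (b j) (μ j) (heigCLM j) (b.orthonormal.1 j)
    set u : Fin n → Fin n → ℂ := fun j => (WithLp.equiv 2 (Fin n → ℂ)) (b j) with hu
    set V : Mat n := Matrix.of (fun p q => u q p) with hV
    set E : Fin n → Mat n := fun j => single j j (1 : ℂ) with hE
    have hEE : ∀ j, E j * E j = E j := by
      intro j
      rw [hE]
      simp
    have hVc : Vᴴ * V = 1 := by
      ext i j
      rw [Matrix.mul_apply, Matrix.one_apply]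
      have hin : ∑ k, (Vᴴ) i k * V k j = (inner ℂ (b i) (b j) : ℂ) := by
        rw [PiLp.inner_apply]
        apply Finset.sum_congr rfl
        intro k _
        rw [Matrix.conjTranspose_apply, RCLike.inner_apply]
        exact mul_comm _ _
      rw [hin, orthonormal_iff_ite.mp b.orthonormal i j]
    have hVV : V * Vᴴ = 1 := mul_eq_one_comm.mp hVc
    set D : Mat n := Matrix.diagonal μ with hD
    have hAV : A * V = V * D := by
      ext i j
      rw [Matrix.mul_apply, Matrix.mul_diagonal]
      have h1 : ∑ k, A i k * V k j = (A *ᵥ (b j).ofLp) i := rfl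
      rw [h1, heig j]
      simp only [Pi.smul_apply, smul_eq_mul, hV, Matrix.of_apply, hu, WithLp.equiv_apply]
      ring
    have hAD : A = V * D * Vᴴ := by
      calc A = A * (V * Vᴴ) := by rw [hVV, mul_one]
      _ = (A * V) * Vᴴ := by rw [mul_assoc]
      _ = (V * D) * Vᴴ := by rw [hAV]
    have hDA : Vᴴ * A * V = D := by
      rw [hAD]
      simp only [← mul_assoc]
      rw [hVc, one_mul, mul_assoc, hVc, mul_one]
    have hsumE : ∑ j, E j = (1 : Mat n) := by rw [hE]; exact sum_stdBasis_diag n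
    have hsumME : ∑ j, μ j • E j = D := by rw [hE, hD]; exact sum_smul_stdBasis_diag μ
    -- upper bound
    have hub : N A ≤ N 1 * opNorm A := by
      set C : Fin n → Mat n := fun j => E j * Vᴴ with hC
      have hCH : ∀ j, (C j)ᴴ = V * E j := by
        intro j
        rw [hC, hE]
        simp only [Matrix.conjTranspose_mul, Matrix.conjTranspose_conjTranspose, stdBasis_conjT]
      have hVEV : ∀ j, (C j)ᴴ * C j = V * (E j * Vᴴ) := by
        intro j
        rw [hCH, hC, mul_assoc]
        congr 1
        rw [← mul_assoc, hEE]
      have hCsum : ∑ j, (C j)ᴴ * C j = 1 := by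
        calc ∑ j, (C j)ᴴ * C j = ∑ j, V * (E j * Vᴴ) := Finset.sum_congr rfl fun j _ => hVEV j
        _ = V * ∑ j, E j * Vᴴ := by rw [Finset.mul_sum]
        _ = V * ((∑ j, E j) * Vᴴ) := by rw [Finset.sum_mul]
        _ = 1 := by rw [hsumE, one_mul, hVV]
      have hXsum : ∑ j, (C j)ᴴ * (μ j • (1 : Mat n)) * C j = A := by
        have hterm : ∀ j, (C j)ᴴ * (μ j • (1 : Mat n)) * C j = V * ((μ j • E j) * Vᴴ) := by
          intro j
          rw [mul_smul_comm, mul_one, smul_mul_assoc, hVEV j, smul_mul_assoc, mul_smul_comm]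
        calc ∑ j, (C j)ᴴ * (μ j • (1 : Mat n)) * C j
            = ∑ j, V * ((μ j • E j) * Vᴴ) := Finset.sum_congr rfl fun j _ => hterm j
        _ = V * ((∑ j, μ j • E j) * Vᴴ) := by rw [Finset.sum_mul, Finset.mul_sum]
        _ = A := by rw [hsumME, ← mul_assoc, ← hAD]
      have key := hM n C (fun j => μ j • (1 : Mat n)) hCsum
      rw [hXsum] at key
      refine key.trans (ciSup_le fun j => ?_)
      rw [hsmul]
      calc ‖μ j‖ * N 1 ≤ opNorm A * N 1 :=
            mul_le_mul_of_nonneg_right (habs j) (hnn 1)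
      _ = N 1 * opNorm A := mul_comm _ _
    -- lower bound
    have hlb : ∀ j, ‖μ j‖ * N 1 ≤ N A := by
      intro j
      set C' : Fin n → Mat n := fun i => V * single j i 1 with hC'
      have hC'H : ∀ i, (C' i)ᴴ = single i j 1 * Vᴴ := by
        intro i
        rw [hC']
        simp only [Matrix.conjTranspose_mul, stdBasis_conjT]
      have hC'sum : ∑ i, (C' i)ᴴ * C' i = 1 := by
        have hterm : ∀ i, (C' i)ᴴ * C' i = E i := by
          intro i
          rw [hC'H, hC', hE]
          calc single i j 1 * Vᴴ * (V * single j i 1)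
              = single i j 1 * (Vᴴ * V) * single j i 1 := by
                rw [mul_assoc, mul_assoc, mul_assoc]
          _ = single i j 1 * single j i 1 := by rw [hVc, mul_one]
          _ = single i i (1 : ℂ) := by simp
        calc ∑ i, (C' i)ᴴ * C' i = ∑ i, E i := Finset.sum_congr rfl fun i _ => hterm i
        _ = 1 := hsumE
      have hC'A : ∑ i, (C' i)ᴴ * A * C' i = μ j • (1 : Mat n) := by
        have hterm : ∀ i, (C' i)ᴴ * A * C' i = μ j • E i := by
          intro i
          rw [hC'H, hC', hE]
          calc single i j 1 * Vᴴ * A * (V * single j i 1)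
              = single i j 1 * (Vᴴ * A * V) * single j i 1 := by
                simp only [mul_assoc]
          _ = single i j 1 * D * single j i 1 := by rw [hDA]
          _ = D j j • single i i 1 := sandwich D i j
          _ = μ j • single i i (1 : ℂ) := by rw [hD, Matrix.diagonal_apply_eq]
        calc ∑ i, (C' i)ᴴ * A * C' i = ∑ i, μ j • E i := Finset.sum_congr rfl fun i _ => hterm i
        _ = μ j • ∑ i, E i := by rw [Finset.smul_sum]
        _ = μ j • (1 : Mat n) := by rw [hsumE]
      have key := hM n C' (fun _ => A) hC'sum
      rw [hC'A] at key
      rw [ciSup_const] at key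
      calc ‖μ j‖ * N 1 = N (μ j • (1 : Mat n)) := (hsmul _ _).symm
      _ ≤ N A := key
    obtain ⟨j₀, -, hj₀⟩ := Finset.exists_max_image (Finset.univ : Finset (Fin n))
      (fun j => ‖μ j‖) ⟨⟨0, hn⟩, Finset.mem_univ _⟩
    have hop : opNorm A ≤ ‖μ j₀‖ :=
      opNorm_le_of_eigs A b μ heigCLM (norm_nonneg _)
        (fun j => hj₀ j (Finset.mem_univ j))
    have hlow : N 1 * opNorm A ≤ N A := by
      calc N 1 * opNorm A ≤ N 1 * ‖μ j₀‖ :=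
            mul_le_mul_of_nonneg_left hop (hnn 1)
      _ = ‖μ j₀‖ * N 1 := mul_comm _ _
      _ ≤ N A := hlb j₀
    exact le_antisymm hub hlow
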